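/- Let k be a field of characteristic 0 and d ≥ 2. The apolar ideal per_d^⊥ ⊆ k[y_{1,1},…,y_{d,d}] of the generic d×d permanent per_d is generated by the following quadrics: (1) y_{i,j}² for all 1 ≤ i,j ≤ d; (2) y_{i,j₁} y_{i,j₂} for all i and j₁ ≠ j₂ (products of two entries from the same row); (3) y_{i₁,j} y_{i₂,j} for all j and i₁ ≠ i₂ (products of two entries from the same column); and (4) y_{i,j} y_{k,l} − y_{i,l} y_{k,j} for all i ≠ k, j ≠ l (determinants of 2×2 submatrices of Y = (y_{i,j})). -/

import Mathlib

open MvPolynomial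

/-- The generic d×d permanent, a form of degree `d` in the `d²` variables `x_{i,j}`. -/
noncomputable def perd (k : Type*) [CommRing k] (d : ℕ) : MvPolynomial (Fin d × Fin d) k :=
  ∑ σ : Equiv.Perm (Fin d), ∏ i : Fin d, X (i, σ i)

/-- The apolarity action: `diffAction θ F` is the result `θ ∘ F` of applying the
constant-coefficient differential operator obtained from `θ` by substituting
`y_{i,j} ↦ ∂/∂x_{i,j}` to the polynomial `F`. -/
noncomputable def diffAction {k : Type*} [CommSemiring k] {σ : Type*}
    (θ F : MvPolynomial σ k) : MvPolynomial σ k :=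
  ∑ a ∈ θ.support, ∑ b ∈ F.support,
    monomial (b - a) (θ.coeff a * F.coeff b * ∏ i ∈ a.support, ((b i).descFactorial (a i) : k))

set_option linter.unusedSectionVars false
set_option linter.unusedVariables false
open Finset

namespace Apolar

variable {k : Type*} [CommSemiring k] {σ : Type*} [Fintype σ] [DecidableEq σ]

/-- product of descending factorials -/
def NN (a b : σ →₀ ℕ) : ℕ := ∏ i : σ, (b i).descFactorial (a i)

lemma NN_eq_zero_of_not_le {a b : σ →₀ ℕ} (h : ¬ a ≤ b) : NN a b = 0 := by
  rw [Finsupp.le_def] at h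
  push_neg at h
  obtain ⟨i, hi⟩ := h
  exact Finset.prod_eq_zero (mem_univ i) (Nat.descFactorial_eq_zero_iff_lt.2 hi)

lemma desc_aux (n A B : ℕ) : (n + B).descFactorial (B + A) =
    (n + B).descFactorial B * n.descFactorial A := by
  induction B with
  | zero => simp
  | succ B ih =>
      have h1 : n + (B + 1) = (n + B) + 1 := by ring
      have h2 : (B + 1) + A = (B + A) + 1 := by ring
      rw [h1, h2, Nat.succ_descFactorial_succ, Nat.succ_descFactorial_succ, ih]
      ring

lemma NN_comp (a b c : σ →₀ ℕ) : NN a (c + a) * NN b ((c + a) + b) = NN (a + b) (c + (a + b)) := by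
  unfold NN
  rw [← Finset.prod_mul_distrib]
  refine Finset.prod_congr rfl fun i _ => ?_
  simp only [Finsupp.add_apply]
  have := desc_aux (c i + a i) (a i) (b i)
  rw [mul_comm] at this
  rw [← this]
  congr 1 <;> ring

noncomputable def Dop (a : σ →₀ ℕ) (F : MvPolynomial σ k) : MvPolynomial σ k :=
  ∑ b ∈ F.support, monomial (b - a) ((NN a b : k) * F.coeff b)

lemma coeff_Dop (a : σ →₀ ℕ) (F : MvPolynomial σ k) (c : σ →₀ ℕ) :
    (Dop a F).coeff c = (NN a (c + a) : k) * F.coeff (c + a) := by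
  unfold Dop
  rw [MvPolynomial.coeff_sum]
  rw [Finset.sum_eq_single (c + a)]
  · rw [coeff_monomial, add_tsub_cancel_right, if_pos rfl]
  · intro b _ hb
    rw [coeff_monomial]
    split_ifs with h
    · have hnle : ¬ a ≤ b := by
        intro hle
        exact hb (by rw [← h, tsub_add_cancel_of_le hle])
      rw [NN_eq_zero_of_not_le hnle]
      simp
    · rfl
  · intro h
    rw [MvPolynomial.notMem_support_iff] at h
    rw [h, mul_zero, coeff_monomial]
    simp

lemma Dop_apply_eq (a : σ →₀ ℕ) (F G : MvPolynomial σ k)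
    (h : ∀ c, F.coeff (c + a) = G.coeff (c + a)) : Dop a F = Dop a G := by
  ext c
  rw [coeff_Dop, coeff_Dop, h]

lemma Dop_add (a : σ →₀ ℕ) (F G : MvPolynomial σ k) :
    Dop a (F + G) = Dop a F + Dop a G := by
  ext c
  simp [coeff_Dop, coeff_add, mul_add]

lemma Dop_smul (a : σ →₀ ℕ) (r : k) (F : MvPolynomial σ k) :
    Dop a (r • F) = r • Dop a F := by
  ext c
  simp [coeff_Dop, coeff_smul]
  ring

lemma Dop_zero (a : σ →₀ ℕ) : Dop a (0 : MvPolynomial σ k) = 0 := by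
  ext c; simp [coeff_Dop]

lemma Dop_comp (a b : σ →₀ ℕ) (F : MvPolynomial σ k) :
    Dop a (Dop b F) = Dop (a + b) F := by
  ext c
  rw [coeff_Dop, coeff_Dop, coeff_Dop, ← mul_assoc, ← Nat.cast_mul, NN_comp, add_assoc]

lemma Dop_zero_exp (F : MvPolynomial σ k) : Dop (0 : σ →₀ ℕ) F = F := by
  ext c
  rw [coeff_Dop]
  simp [NN]

lemma diffAction_eq (θ F : MvPolynomial σ k) :
    diffAction θ F = ∑ a ∈ θ.support, θ.coeff a • Dop a F := by
  unfold diffAction Dop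
  refine Finset.sum_congr rfl fun a _ => ?_
  rw [Finset.smul_sum]
  refine Finset.sum_congr rfl fun b _ => ?_
  rw [smul_monomial]
  congr 1
  have : (∏ i ∈ a.support, ((b i).descFactorial (a i) : k)) = (NN a b : k) := by
    unfold NN
    push_cast
    refine Finset.prod_subset (subset_univ _) fun i _ hi => ?_
    rw [Finsupp.notMem_support_iff.mp hi]
    simp
  rw [this, smul_eq_mul]; ring

lemma diffAction_monomial (a : σ →₀ ℕ) (r : k) (F : MvPolynomial σ k) :
    diffAction (monomial a r) F = r • Dop a F := by
  classical
  rw [diffAction_eq]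
  rcases eq_or_ne r 0 with h | h
  · simp [h, monomial_zero]
  · rw [support_monomial, if_neg h, Finset.sum_singleton, coeff_monomial, if_pos rfl]

lemma diffAction_zero_left (F : MvPolynomial σ k) : diffAction (0 : MvPolynomial σ k) F = 0 := by
  rw [diffAction_eq]
  simp

lemma diffAction_add_left (θ ψ F : MvPolynomial σ k) :
    diffAction (θ + ψ) F = diffAction θ F + diffAction ψ F := by
  rw [diffAction_eq, diffAction_eq, diffAction_eq]
  have key : ∀ (χ : MvPolynomial σ k) (s : Finset (σ →₀ ℕ)), χ.support ⊆ s →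
      ∑ a ∈ χ.support, χ.coeff a • Dop a F = ∑ a ∈ s, χ.coeff a • Dop a F := by
    intro χ s hs
    refine Finset.sum_subset hs fun a _ ha => ?_
    rw [notMem_support_iff.mp ha, zero_smul]
  rw [key (θ + ψ) (θ.support ∪ ψ.support) (support_add),
      key θ (θ.support ∪ ψ.support) (subset_union_left),
      key ψ (θ.support ∪ ψ.support) (subset_union_right), ← Finset.sum_add_distrib]
  refine Finset.sum_congr rfl fun a _ => ?_
  rw [coeff_add, add_smul]

lemma diffAction_sum_left {ι : Type*} (s : Finset ι) (f : ι → MvPolynomial σ k)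
    (F : MvPolynomial σ k) :
    diffAction (∑ i ∈ s, f i) F = ∑ i ∈ s, diffAction (f i) F := by
  classical
  induction s using Finset.induction with
  | empty => simp [diffAction_zero_left]
  | insert _ _ h ih => rw [Finset.sum_insert h, Finset.sum_insert h, diffAction_add_left, ih]

lemma diffAction_zero_right (θ : MvPolynomial σ k) : diffAction θ (0 : MvPolynomial σ k) = 0 := by
  rw [diffAction_eq]
  refine Finset.sum_eq_zero fun a _ => ?_
  rw [Dop_zero, smul_zero]

lemma diffAction_mul (θ ψ F : MvPolynomial σ k) :
    diffAction (θ * ψ) F = diffAction θ (diffAction ψ F) := by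
  induction θ using MvPolynomial.induction_on' with
  | add θ₁ θ₂ ih1 ih2 => rw [add_mul, diffAction_add_left, ih1, ih2, diffAction_add_left]
  | monomial a r =>
    induction ψ using MvPolynomial.induction_on' with
    | add ψ₁ ψ₂ ih1 ih2 =>
        rw [mul_add, diffAction_add_left, ih1, ih2, diffAction_add_left, diffAction_monomial,
          diffAction_monomial, diffAction_monomial, ← smul_add, ← Dop_add]
    | monomial b s =>
        rw [monomial_mul, diffAction_monomial, diffAction_monomial, diffAction_monomial,
          Dop_smul, Dop_comp, smul_smul]

/-- the apolar ideal of F -/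
noncomputable def apolar (F : MvPolynomial σ k) : Ideal (MvPolynomial σ k) where
  carrier := {θ | diffAction θ F = 0}
  add_mem' := by
    intro a b ha hb
    simp only [Set.mem_setOf_eq] at *
    rw [diffAction_add_left, ha, hb, add_zero]
  zero_mem' := diffAction_zero_left F
  smul_mem' := by
    intro c θ hθ
    simp only [Set.mem_setOf_eq, smul_eq_mul] at *
    rw [diffAction_mul, hθ, diffAction_zero_right]

lemma mem_apolar_iff (F θ : MvPolynomial σ k) : θ ∈ apolar F ↔ diffAction θ F = 0 := Iff.rfl


section PerSection
variable {d : ℕ}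

abbrev Idx (d : ℕ) := Fin d × Fin d

def nodup (S : Finset (Idx d)) : Prop := ∀ p ∈ S, ∀ q ∈ S, (p.1 = q.1 ∨ p.2 = q.2) → p = q

noncomputable def mS (S : Finset (Idx d)) : Idx d →₀ ℕ := ∑ p ∈ S, Finsupp.single p 1

lemma mS_apply (S : Finset (Idx d)) (p : Idx d) : mS S p = if p ∈ S then 1 else 0 := by
  classical
  rw [mS, Finsupp.finset_sum_apply]
  simp only [Finsupp.single_apply]
  rw [Finset.sum_ite_eq' S p (fun _ => 1)]

lemma mS_le_one (S : Finset (Idx d)) (p : Idx d) : mS S p ≤ 1 := by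
  rw [mS_apply]; split_ifs <;> simp

lemma support_mS (S : Finset (Idx d)) : (mS S).support = S := by
  ext p
  rw [Finsupp.mem_support_iff, mS_apply]
  split_ifs with h <;> simp [h]

lemma mS_injective : Function.Injective (mS (d := d)) := by
  intro S T h
  have := congrArg Finsupp.support h
  rwa [support_mS, support_mS] at this

lemma mS_union_disjoint {S T : Finset (Idx d)} (h : Disjoint S T) :
    mS (S ∪ T) = mS S + mS T := by
  rw [mS, mS, mS, Finset.sum_union h]

def rowsOf (S : Finset (Idx d)) : Finset (Fin d) := S.image Prod.fst
def colsOf (S : Finset (Idx d)) : Finset (Fin d) := S.image Prod.snd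

noncomputable def graph (s : Equiv.Perm (Fin d)) : Finset (Idx d) :=
  univ.image (fun i => (i, s i))

lemma mem_graph {s : Equiv.Perm (Fin d)} {p : Idx d} : p ∈ graph s ↔ s p.1 = p.2 := by
  constructor
  · intro h
    obtain ⟨i, _, hi⟩ := Finset.mem_image.mp h
    rw [← hi]
  · intro h
    exact Finset.mem_image.mpr ⟨p.1, mem_univ _, by rw [h]⟩

lemma nodup_graph (s : Equiv.Perm (Fin d)) : nodup (graph s) := by
  intro p hp q hq hpq
  rw [mem_graph] at hp hq
  rcases hpq with h | h
  · have : p.2 = q.2 := by rw [← hp, ← hq, h]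
    exact Prod.ext h this
  · have : p.1 = q.1 := s.injective (by rw [hp, hq, h])
    exact Prod.ext this h

lemma rows_graph (s : Equiv.Perm (Fin d)) : rowsOf (graph s) = univ := by
  ext i
  simp only [mem_univ, iff_true, rowsOf, Finset.mem_image]
  exact ⟨(i, s i), mem_graph.mpr rfl, rfl⟩

lemma cols_graph (s : Equiv.Perm (Fin d)) : colsOf (graph s) = univ := by
  ext j
  simp only [mem_univ, iff_true, colsOf, Finset.mem_image]
  exact ⟨(s.symm j, j), mem_graph.mpr (s.apply_symm_apply j), rfl⟩

lemma graph_injective : Function.Injective (graph (d := d)) := by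
  intro s t h
  ext i
  have h2 : (i, s i) ∈ graph t := h ▸ mem_graph.mpr rfl
  have h3 : t i = s i := mem_graph.mp h2
  simp [h3]

/-- any nodup set covering all rows and columns is the graph of a permutation -/
lemma exists_perm_of_full {S : Finset (Idx d)} (hnd : nodup S)
    (hr : rowsOf S = univ) (hc : colsOf S = univ) : ∃ s : Equiv.Perm (Fin d), S = graph s := by
  classical
  have hrow : ∀ i : Fin d, ∃ j, (i, j) ∈ S := by
    intro i
    have : i ∈ rowsOf S := hr ▸ mem_univ i
    obtain ⟨p, hp, hpi⟩ := Finset.mem_image.mp this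
    exact ⟨p.2, by rwa [← hpi, Prod.mk.eta] ⟩
  choose f hf using hrow
  have hinj : Function.Injective f := by
    intro i₁ i₂ h
    have := hnd _ (hf i₁) _ (hf i₂) (Or.inr h)
    exact (Prod.ext_iff.mp this).1
  let s := Equiv.ofBijective f (Finite.injective_iff_bijective.mp hinj)
  refine ⟨s, ?_⟩
  ext ⟨i, j⟩
  rw [mem_graph]
  show (i, j) ∈ S ↔ f i = j
  constructor
  · intro h
    exact ((Prod.ext_iff.mp (hnd _ (hf i) _ h (Or.inl rfl))).2)
  · rintro rfl
    exact hf i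

lemma prod_X_eq_monomial {k : Type*} [CommRing k] {ι : Type*} (t : Finset ι)
    (f : ι → Idx d) :
    (∏ i ∈ t, (X (f i) : MvPolynomial (Idx d) k)) =
      monomial (∑ i ∈ t, Finsupp.single (f i) 1) 1 := by
  classical
  induction t using Finset.induction with
  | empty => simp
  | insert _ _ h ih =>
      rw [Finset.prod_insert h, Finset.sum_insert h, ih, X, monomial_mul, one_mul]

lemma perd_eq (k : Type*) [CommRing k] :
    perd k d = ∑ s : Equiv.Perm (Fin d), monomial (mS (graph s)) (1 : k) := by
  unfold perd
  refine Finset.sum_congr rfl fun s _ => ?_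
  rw [prod_X_eq_monomial]
  congr 1
  rw [mS, graph, Finset.sum_image]
  intro i _ j _ h
  exact (Prod.ext_iff.mp h).1

lemma coeff_perd_mS (k : Type*) [CommRing k] (s : Equiv.Perm (Fin d)) :
    (perd k d).coeff (mS (graph s)) = 1 := by
  classical
  rw [perd_eq, coeff_sum]
  rw [Finset.sum_eq_single s]
  · rw [coeff_monomial, if_pos rfl]
  · intro t _ hts
    rw [coeff_monomial, if_neg]
    exact fun h => hts (graph_injective (mS_injective h))
  · intro h
    exact absurd (mem_univ s) h

lemma coeff_perd_eq_zero {k : Type*} [CommRing k] {b : Idx d →₀ ℕ}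
    (h : ∀ s : Equiv.Perm (Fin d), b ≠ mS (graph s)) : (perd k d).coeff b = 0 := by
  classical
  rw [perd_eq, coeff_sum]
  refine Finset.sum_eq_zero fun s _ => ?_
  rw [coeff_monomial, if_neg fun hc => h s hc.symm]


end PerSection
section PartA
variable {k : Type*} [CommRing k] {d : ℕ}

/-- exponent of a product of two distinct variables -/
noncomputable def pr (p q : Idx d) : Idx d →₀ ℕ := Finsupp.single p 1 + Finsupp.single q 1

lemma pr_apply_left {p q : Idx d} (h : p ≠ q) : pr p q p = 1 := by
  simp [pr, Finsupp.single_apply, h.symm]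

lemma pr_apply_right {p q : Idx d} (h : p ≠ q) : pr p q q = 1 := by
  simp [pr, Finsupp.single_apply, h]

lemma X_mul_X (p q : Idx d) : (X p * X q : MvPolynomial (Idx d) k) = monomial (pr p q) 1 := by
  rw [X, X, monomial_mul, one_mul, pr]

lemma NN_pr {p q : Idx d} (h : p ≠ q) (x : Idx d →₀ ℕ) : NN (pr p q) x = x p * x q := by
  unfold NN
  rw [← Finset.prod_subset (Finset.subset_univ ({p, q} : Finset (Idx d)))]
  · rw [Finset.prod_pair h, pr_apply_left h, pr_apply_right h,
      Nat.descFactorial_one, Nat.descFactorial_one]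
  · intro r _ hr
    simp only [Finset.mem_insert, Finset.mem_singleton] at hr
    push_neg at hr
    have : pr p q r = 0 := by
      simp [pr, Finsupp.single_apply, Ne.symm (hr.1), Ne.symm (hr.2)]
    rw [this, Nat.descFactorial_zero]

lemma exists_perm_of_coeff_ne_zero {b : Idx d →₀ ℕ}
    (h : (perd k d).coeff b ≠ 0) : ∃ s : Equiv.Perm (Fin d), b = mS (graph s) := by
  by_contra hc
  push_neg at hc
  exact h (coeff_perd_eq_zero hc)

lemma mem_of_mS_pos {S : Finset (Idx d)} {p : Idx d} (h : 1 ≤ mS S p) : p ∈ S := by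
  by_contra hp
  rw [mS_apply, if_neg hp] at h
  omega

lemma Dop_sq_perd (p : Idx d) : Dop (Finsupp.single p 2) (perd k d) = 0 := by
  ext c
  rw [coeff_Dop, coeff_zero]
  have : (perd k d).coeff (c + Finsupp.single p 2) = 0 := by
    refine coeff_perd_eq_zero fun s hs => ?_
    have h1 := congrArg (fun f : Idx d →₀ ℕ => f p) hs
    simp only [Finsupp.add_apply, Finsupp.single_eq_same] at h1
    have h2 := mS_le_one (graph s) p
    omega
  rw [this, mul_zero]

lemma Dop_row_perd {i : Fin d} {j₁ j₂ : Fin d} (h : j₁ ≠ j₂) :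
    Dop (pr (i, j₁) (i, j₂)) (perd k d) = 0 := by
  have hpq : ((i, j₁) : Idx d) ≠ (i, j₂) := fun hc => h (Prod.ext_iff.mp hc).2
  ext c
  rw [coeff_Dop, coeff_zero]
  have : (perd k d).coeff (c + pr (i, j₁) (i, j₂)) = 0 := by
    refine coeff_perd_eq_zero fun s hs => ?_
    have m1 : (i, j₁) ∈ graph s := by
      refine mem_of_mS_pos ?_
      rw [← hs]
      have := pr_apply_left hpq
      simp only [Finsupp.add_apply]
      omega
    have m2 : (i, j₂) ∈ graph s := by
      refine mem_of_mS_pos ?_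
      rw [← hs]
      have := pr_apply_right hpq
      simp only [Finsupp.add_apply]
      omega
    rw [mem_graph] at m1 m2
    exact h (m1.symm.trans m2)
  rw [this, mul_zero]

lemma Dop_col_perd {i₁ i₂ : Fin d} {j : Fin d} (h : i₁ ≠ i₂) :
    Dop (pr (i₁, j) (i₂, j)) (perd k d) = 0 := by
  have hpq : ((i₁, j) : Idx d) ≠ (i₂, j) := fun hc => h (Prod.ext_iff.mp hc).1
  ext c
  rw [coeff_Dop, coeff_zero]
  have : (perd k d).coeff (c + pr (i₁, j) (i₂, j)) = 0 := by
    refine coeff_perd_eq_zero fun s hs => ?_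
    have m1 : (i₁, j) ∈ graph s := by
      refine mem_of_mS_pos ?_
      rw [← hs]
      have := pr_apply_left hpq
      simp only [Finsupp.add_apply]
      omega
    have m2 : (i₂, j) ∈ graph s := by
      refine mem_of_mS_pos ?_
      rw [← hs]
      have := pr_apply_right hpq
      simp only [Finsupp.add_apply]
      omega
    rw [mem_graph] at m1 m2
    exact h (s.injective (m1.trans m2.symm))
  rw [this, mul_zero]

lemma mS_graph_apply (s : Equiv.Perm (Fin d)) (p : Idx d) :
    mS (graph s) p = if s p.1 = p.2 then 1 else 0 := by
  classical
  rw [mS_apply]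
  congr 1
  simp [mem_graph]

lemma det_swap {i i' j j' : Fin d} (hii : i ≠ i') (hjj : j ≠ j') (s : Equiv.Perm (Fin d))
    (hsi : s i = j) (hsi' : s i' = j') :
    mS (graph s) + pr (i, j') (i', j) =
      mS (graph (s * Equiv.swap i i')) + pr (i, j) (i', j') := by
  classical
  have ti : (s * Equiv.swap i i') i = j' := by
    rw [Equiv.Perm.mul_apply, Equiv.swap_apply_left, hsi']
  have ti' : (s * Equiv.swap i i') i' = j := by
    rw [Equiv.Perm.mul_apply, Equiv.swap_apply_right, hsi]
  ext ⟨p₁, p₂⟩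
  simp only [Finsupp.add_apply, mS_graph_apply, pr, Finsupp.single_apply]
  by_cases h1 : p₁ = i
  · subst h1
    rw [hsi, ti]
    by_cases h2 : p₂ = j <;> by_cases h3 : p₂ = j' <;>
      simp_all [Prod.ext_iff, hii, hii.symm, hjj, hjj.symm] <;>
      try exact add_comm _ _
  · by_cases h2 : p₁ = i'
    · subst h2
      rw [hsi', ti']
      by_cases h3 : p₂ = j <;> by_cases h4 : p₂ = j' <;>
        simp_all [Prod.ext_iff, hii, hii.symm, hjj, hjj.symm] <;>
        try exact add_comm _ _
    · have : Equiv.swap i i' p₁ = p₁ := Equiv.swap_apply_of_ne_of_ne h1 h2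
      rw [Equiv.Perm.mul_apply, this]
      have h1' : ¬ i = p₁ := fun h => h1 h.symm
      have h2' : ¬ i' = p₁ := fun h => h2 h.symm
      simp [Prod.ext_iff, h1', h2']

end PartA
section PartA2
variable {k : Type*} [CommRing k] [Nontrivial k] {d : ℕ}

lemma pr_ne {i i' j j' : Fin d} (hii : i ≠ i') : ((i,j) : Idx d) ≠ (i',j') :=
  fun hc => hii (Prod.ext_iff.mp hc).1

lemma half {c : Idx d →₀ ℕ} {i i' j j' : Fin d} (hii : i ≠ i') (hjj : j ≠ j')
    (h : (perd k d).coeff (c + pr (i,j) (i',j')) ≠ 0) :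
    (perd k d).coeff (c + pr (i,j) (i',j')) = 1 ∧
    (perd k d).coeff (c + pr (i,j') (i',j)) = 1 ∧
    NN (pr (i,j) (i',j')) (c + pr (i,j) (i',j')) = 1 ∧
    NN (pr (i,j') (i',j)) (c + pr (i,j') (i',j)) = 1 := by
  obtain ⟨s, hs⟩ := exists_perm_of_coeff_ne_zero h
  have hp1 : ((i,j) : Idx d) ≠ (i',j') := pr_ne hii
  have hp2 : ((i,j') : Idx d) ≠ (i',j) := pr_ne hii
  have hsi : s i = j := by
    have hm : (i, j) ∈ graph s := by
      refine mem_of_mS_pos ?_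
      rw [← hs]
      have := pr_apply_left hp1
      simp only [Finsupp.add_apply]
      omega
    exact mem_graph.mp hm
  have hsi' : s i' = j' := by
    have hm : (i', j') ∈ graph s := by
      refine mem_of_mS_pos ?_
      rw [← hs]
      have := pr_apply_right hp1
      simp only [Finsupp.add_apply]
      omega
    exact mem_graph.mp hm
  set t := s * Equiv.swap i i' with ht
  have hti : t i = j' := by rw [ht, Equiv.Perm.mul_apply, Equiv.swap_apply_left, hsi']
  have hti' : t i' = j := by rw [ht, Equiv.Perm.mul_apply, Equiv.swap_apply_right, hsi]
  have hkey : c + pr (i,j') (i',j) = mS (graph t) := by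
    have h1 : (c + pr (i,j) (i',j')) + pr (i,j') (i',j)
        = mS (graph t) + pr (i,j) (i',j') := by
      rw [hs, det_swap hii hjj s hsi hsi']
    have h2 : (c + pr (i,j') (i',j)) + pr (i,j) (i',j')
        = mS (graph t) + pr (i,j) (i',j') := by
      rw [← h1]; abel
    exact add_right_cancel h2
  refine ⟨?_, ?_, ?_, ?_⟩
  · rw [hs, coeff_perd_mS]
  · rw [hkey, coeff_perd_mS]
  · rw [hs, NN_pr hp1, mS_graph_apply, mS_graph_apply]
    simp [hsi, hsi']
  · rw [hkey, NN_pr hp2, mS_graph_apply, mS_graph_apply]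
    simp [hti, hti']

lemma Dop_det_perd {i i' j j' : Fin d} (hii : i ≠ i') (hjj : j ≠ j') :
    Dop (pr (i,j) (i',j')) (perd k d) = Dop (pr (i,j') (i',j)) (perd k d) := by
  ext c
  rw [coeff_Dop, coeff_Dop]
  by_cases h1 : (perd k d).coeff (c + pr (i,j) (i',j')) = 0
  · by_cases h2 : (perd k d).coeff (c + pr (i,j') (i',j)) = 0
    · rw [h1, h2, mul_zero, mul_zero]
    · obtain ⟨A1, A2, A3, A4⟩ := half hii hjj.symm h2
      rw [h1] at A2
      exact absurd A2 zero_ne_one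
  · obtain ⟨A1, A2, A3, A4⟩ := half hii hjj h1
    rw [A1, A2, A3, A4]

lemma diffAction_sub (θ ψ F : MvPolynomial (Idx d) k) :
    diffAction (θ - ψ) F = diffAction θ F - diffAction ψ F := by
  rw [eq_sub_iff_add_eq, ← diffAction_add_left, sub_add_cancel]

/-- the generating set of quadrics -/
def gens (k : Type*) [CommRing k] (d : ℕ) : Set (MvPolynomial (Fin d × Fin d) k) :=
  ({p | ∃ i j : Fin d, p = X (i, j) ^ 2} ∪
   {p | ∃ (i j₁ j₂ : Fin d), j₁ ≠ j₂ ∧ p = X (i, j₁) * X (i, j₂)} ∪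
   {p | ∃ (i₁ i₂ j : Fin d), i₁ ≠ i₂ ∧ p = X (i₁, j) * X (i₂, j)} ∪
   {p | ∃ (i k' j l : Fin d), i ≠ k' ∧ j ≠ l ∧
      p = X (i, j) * X (k', l) - X (i, l) * X (k', j)})

lemma span_gens_le_apolar : Ideal.span (gens k d) ≤ apolar (perd k d) := by
  rw [Ideal.span_le]
  rintro g (((⟨i,j,rfl⟩ | ⟨i,j₁,j₂,hne,rfl⟩) | ⟨i₁,i₂,j,hne,rfl⟩) | ⟨i,i',j,l,hii,hjl,rfl⟩)
  · show diffAction _ _ = 0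
    rw [X_pow_eq_monomial, diffAction_monomial]
    have : Finsupp.single ((i,j) : Idx d) 2 = Finsupp.single (i,j) 2 := rfl
    rw [Dop_sq_perd, smul_zero]
  · show diffAction _ _ = 0
    rw [X_mul_X, diffAction_monomial, Dop_row_perd hne, smul_zero]
  · show diffAction _ _ = 0
    rw [X_mul_X, diffAction_monomial, Dop_col_perd hne, smul_zero]
  · show diffAction _ _ = 0
    rw [diffAction_sub, X_mul_X, X_mul_X, diffAction_monomial, diffAction_monomial,
      Dop_det_perd hii hjl, sub_self]

end PartA2
section PartB
variable {k : Type*} [CommRing k] {d : ℕ}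

def good (b : Idx d →₀ ℕ) : Prop := (∀ p, b p ≤ 1) ∧ nodup b.support

lemma good_eq_mS {b : Idx d →₀ ℕ} (h : good b) : b = mS b.support := by
  ext p
  rw [mS_apply]
  split_ifs with hp
  · have h1 := Finsupp.mem_support_iff.mp hp
    have h2 := h.1 p
    omega
  · exact Finsupp.notMem_support_iff.mp hp

lemma pr_le {b : Idx d →₀ ℕ} {p q : Idx d} (hpq : p ≠ q)
    (hp : p ∈ b.support) (hq : q ∈ b.support) : pr p q ≤ b := by
  have hp1 := Finsupp.mem_support_iff.mp hp
  have hq1 := Finsupp.mem_support_iff.mp hq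
  rw [Finsupp.le_def]
  intro r
  simp only [pr, Finsupp.add_apply, Finsupp.single_apply]
  by_cases h1 : p = r
  · subst h1
    rw [if_pos rfl, if_neg (Ne.symm hpq)]
    omega
  · rw [if_neg h1]
    by_cases h2 : q = r
    · subst h2
      rw [if_pos rfl]
      omega
    · rw [if_neg h2]
      omega

lemma monomial_mem_of_le {a b : Idx d →₀ ℕ} (hle : a ≤ b) (r : k)
    (h : (monomial a 1 : MvPolynomial (Idx d) k) ∈ Ideal.span (gens k d)) :
    (monomial b r : MvPolynomial (Idx d) k) ∈ Ideal.span (gens k d) := by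
  have : (monomial b r : MvPolynomial (Idx d) k) = monomial (b - a) r * monomial a 1 := by
    rw [monomial_mul, mul_one, tsub_add_cancel_of_le hle]
  rw [this]
  exact Ideal.mul_mem_left _ _ h

lemma sq_mem_gens (p : Idx d) : (monomial (Finsupp.single p 2) 1 : MvPolynomial (Idx d) k)
    ∈ gens k d := by
  left; left; left
  exact ⟨p.1, p.2, by rw [X_pow_eq_monomial]⟩

lemma bad_mem_span {b : Idx d →₀ ℕ} (hb : ¬ good b) (r : k) :
    (monomial b r : MvPolynomial (Idx d) k) ∈ Ideal.span (gens k d) := by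
  classical
  unfold good at hb
  push_neg at hb
  by_cases h1 : ∀ p, b p ≤ 1
  · obtain ⟨p, hp, q, hq, hor, hne⟩ := by
      have h2 := hb h1
      unfold nodup at h2
      push_neg at h2
      exact h2
    have hle : pr p q ≤ b := pr_le hne hp hq
    rcases hor with h | h
    · -- same row
      refine monomial_mem_of_le hle r (Ideal.subset_span ?_)
      left; left; right
      refine ⟨p.1, p.2, q.2, fun hc => hne (Prod.ext h hc), ?_⟩
      have h2 : ((p.1, q.2) : Idx d) = q := Prod.ext h rfl
      rw [X_mul_X, Prod.mk.eta, h2]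
    · -- same column
      refine monomial_mem_of_le hle r (Ideal.subset_span ?_)
      left; right
      refine ⟨p.1, q.1, p.2, fun hc => hne (Prod.ext hc h), ?_⟩
      have h2 : ((q.1, p.2) : Idx d) = q := Prod.ext rfl h
      rw [X_mul_X, Prod.mk.eta, h2]
  · push_neg at h1
    obtain ⟨p, hp⟩ := h1
    have hle : Finsupp.single p 2 ≤ b := by
      rw [Finsupp.single_le_iff]
      omega
    exact monomial_mem_of_le hle r (Ideal.subset_span (sq_mem_gens p))

lemma card_rowsOf {S : Finset (Idx d)} (h : nodup S) : (rowsOf S).card = S.card :=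
  Finset.card_image_of_injOn fun p hp q hq hpq => h p hp q hq (Or.inl hpq)

lemma card_colsOf {S : Finset (Idx d)} (h : nodup S) : (colsOf S).card = S.card :=
  Finset.card_image_of_injOn fun p hp q hq hpq => h p hp q hq (Or.inr hpq)

/-- a canonical nodup set with given row and column sets -/
noncomputable def ppSet (R C : Finset (Fin d)) (h : R.card = C.card) : Finset (Idx d) :=
  (Finset.univ : Finset (Fin R.card)).image
    (fun i => (((R.orderIsoOfFin rfl i : {x // x ∈ R}) : Fin d),
               ((C.orderIsoOfFin h.symm i : {x // x ∈ C}) : Fin d)))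

lemma nodup_ppSet (R C : Finset (Fin d)) (h : R.card = C.card) : nodup (ppSet R C h) := by
  intro p hp q hq hor
  obtain ⟨i, _, hi⟩ := Finset.mem_image.mp hp
  obtain ⟨i', _, hi'⟩ := Finset.mem_image.mp hq
  rcases hor with he | he
  · have : i = i' := by
      have h1 : ((R.orderIsoOfFin rfl i : {x // x ∈ R}) : Fin d)
          = ((R.orderIsoOfFin rfl i' : {x // x ∈ R}) : Fin d) := by
        rw [← hi, ← hi'] at he
        exact he
      exact (R.orderIsoOfFin rfl).injective (Subtype.ext h1)
    rw [← hi, ← hi', this]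
  · have : i = i' := by
      have h1 : ((C.orderIsoOfFin h.symm i : {x // x ∈ C}) : Fin d)
          = ((C.orderIsoOfFin h.symm i' : {x // x ∈ C}) : Fin d) := by
        rw [← hi, ← hi'] at he
        exact he
      exact (C.orderIsoOfFin h.symm).injective (Subtype.ext h1)
    rw [← hi, ← hi', this]

lemma rows_ppSet (R C : Finset (Fin d)) (h : R.card = C.card) : rowsOf (ppSet R C h) = R := by
  ext x
  simp only [rowsOf, ppSet, Finset.mem_image]
  constructor
  · rintro ⟨p, ⟨i, _, hi⟩, hx⟩
    rw [← hx, ← hi]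
    exact (R.orderIsoOfFin rfl i).2
  · intro hx
    obtain ⟨i, hi⟩ := (R.orderIsoOfFin rfl).surjective ⟨x, hx⟩
    exact ⟨_, ⟨i, Finset.mem_univ i, rfl⟩, by rw [hi]⟩

lemma cols_ppSet (R C : Finset (Fin d)) (h : R.card = C.card) : colsOf (ppSet R C h) = C := by
  ext x
  simp only [colsOf, ppSet, Finset.mem_image]
  constructor
  · rintro ⟨p, ⟨i, _, hi⟩, hx⟩
    rw [← hx, ← hi]
    exact (C.orderIsoOfFin h.symm i).2
  · intro hx
    obtain ⟨i, hi⟩ := (C.orderIsoOfFin h.symm).surjective ⟨x, hx⟩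
    exact ⟨_, ⟨i, Finset.mem_univ i, rfl⟩, by rw [hi]⟩

end PartB
section ClaimA
variable {k : Type*} [CommRing k] {d : ℕ}

lemma mS_pair {p q : Idx d} (h : p ≠ q) : mS ({p, q} : Finset (Idx d)) = pr p q := by
  rw [mS, Finset.sum_pair h, pr]

lemma mS_insert_insert {p q : Idx d} {T : Finset (Idx d)} (hpq : p ≠ q)
    (hp : p ∉ T) (hq : q ∉ T) : mS (insert p (insert q T)) = mS T + pr p q := by
  have he : insert p (insert q T) = T ∪ {p, q} := by
    ext r
    simp only [Finset.mem_insert, Finset.mem_union, Finset.mem_singleton]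
    tauto
  have hd : Disjoint T ({p, q} : Finset (Idx d)) := by
    rw [Finset.disjoint_right]
    intro r hr
    simp only [Finset.mem_insert, Finset.mem_singleton] at hr
    rcases hr with rfl | rfl
    · exact hp
    · exact hq
  rw [he, mS_union_disjoint hd, mS_pair hpq]

lemma congr_mod_gens_aux {S : Finset (Idx d)} (hS : nodup S) :
    ∀ n : ℕ, ∀ S' : Finset (Idx d), (S' \ S).card ≤ n → nodup S' →
    rowsOf S = rowsOf S' → colsOf S = colsOf S' →
    (monomial (mS S) (1:k) - monomial (mS S') 1) ∈ Ideal.span (gens k d) := by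
  have base : ∀ S' : Finset (Idx d), S' ⊆ S → nodup S' → rowsOf S = rowsOf S' →
      (monomial (mS S) (1:k) - monomial (mS S') 1) ∈ Ideal.span (gens k d) := by
    intro S' hsub hS' hr
    have hcards : S.card = S'.card := by
      rw [← card_rowsOf hS, ← card_rowsOf hS', hr]
    have : S' = S := Finset.eq_of_subset_of_card_le hsub (le_of_eq hcards)
    rw [this, sub_self]
    exact Ideal.zero_mem _
  intro n
  induction n with
  | zero =>
      intro S' hcard hS' hr hc
      have hsub : S' ⊆ S := by
        rw [Nat.le_zero, Finset.card_eq_zero, Finset.sdiff_eq_empty_iff_subset] at hcard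
        exact hcard
      exact base S' hsub hS' hr
  | succ n ih =>
      intro S' hcard hS' hr hc
      by_cases hsub : S' ⊆ S
      · exact base S' hsub hS' hr
      · classical
        have hcards : S.card = S'.card := by
          rw [← card_rowsOf hS, ← card_rowsOf hS', hr]
        have hSnotsub : ¬ S ⊆ S' := by
          intro h
          have heq : S = S' := Finset.eq_of_subset_of_card_le h (le_of_eq hcards.symm)
          exact hsub heq.ge
        obtain ⟨⟨i, j⟩, hijS, hijS'⟩ := Finset.not_subset.mp hSnotsub
        -- find (i, j') in S'
        have hiR : i ∈ rowsOf S' := by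
          rw [← hr, rowsOf]
          exact Finset.mem_image.mpr ⟨(i,j), hijS, rfl⟩
        obtain ⟨p', hp'S'0, hp'1⟩ := Finset.mem_image.mp hiR
        set j' := p'.2 with hj'def
        have hp'S' : ((i, j') : Idx d) ∈ S' := by
          have he : p' = (i, j') := Prod.ext hp'1 rfl
          rwa [he] at hp'S'0
        -- find (i', j) in S'
        have hjC : j ∈ colsOf S' := by
          rw [← hc, colsOf]
          exact Finset.mem_image.mpr ⟨(i,j), hijS, rfl⟩
        obtain ⟨q', hq'S'0, hq'1⟩ := Finset.mem_image.mp hjC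
        set i' := q'.1 with hi'def
        have hq'S' : ((i', j) : Idx d) ∈ S' := by
          have he : q' = (i', j) := Prod.ext rfl hq'1
          rwa [he] at hq'S'0
        have hjj' : j ≠ j' := fun h => hijS' (h ▸ hp'S')
        have hii' : i ≠ i' := fun h => hijS' (h ▸ hq'S')
        have hij'_notS : ((i,j') : Idx d) ∉ S := by
          intro h
          exact hjj' (Prod.ext_iff.mp (hS (i,j) hijS (i,j') h (Or.inl rfl))).2
        have hi'j_notS : ((i',j) : Idx d) ∉ S := by
          intro h
          exact hii' (Prod.ext_iff.mp (hS (i,j) hijS (i',j) h (Or.inr rfl))).1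
        have hi'j'_notS' : ((i',j') : Idx d) ∉ S' := by
          intro h
          exact hjj' (Prod.ext_iff.mp (hS' (i',j) hq'S' (i',j') h (Or.inl rfl))).2
        set rest := (S'.erase (i,j')).erase (i',j) with hrest_def
        set S'' := insert ((i,j) : Idx d) (insert (i',j') rest) with hS''_def
        have hne1 : ((i,j') : Idx d) ≠ (i',j) := fun h => hii' (Prod.ext_iff.mp h).1
        have hne2 : ((i,j) : Idx d) ≠ (i',j') := fun h => hii' (Prod.ext_iff.mp h).1
        have mem_rest : ∀ p : Idx d, p ∈ rest ↔ p ∈ S' ∧ p ≠ (i,j') ∧ p ≠ (i',j) := by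
          intro p
          rw [hrest_def, Finset.mem_erase, Finset.mem_erase]
          tauto
        have mem_S'' : ∀ p : Idx d, p ∈ S'' ↔
            p = (i,j) ∨ p = (i',j') ∨ (p ∈ S' ∧ p ≠ (i,j') ∧ p ≠ (i',j)) := by
          intro p
          rw [hS''_def, Finset.mem_insert, Finset.mem_insert, mem_rest]
        have hrest_facts : ∀ p : Idx d, p ∈ S' → p ≠ (i,j') → p ≠ (i',j) →
            p.1 ≠ i ∧ p.1 ≠ i' ∧ p.2 ≠ j ∧ p.2 ≠ j' := by
          intro p hp h1 h2
          refine ⟨?_, ?_, ?_, ?_⟩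
          · intro h
            exact h1 (hS' p hp (i,j') hp'S' (Or.inl h))
          · intro h
            exact h2 (hS' p hp (i',j) hq'S' (Or.inl h))
          · intro h
            exact h2 (hS' p hp (i',j) hq'S' (Or.inr h))
          · intro h
            exact h1 (hS' p hp (i,j') hp'S' (Or.inr h))
        have hnodup'' : nodup S'' := by
          intro p hp q hq hor
          rcases (mem_S'' p).mp hp with rfl | rfl | ⟨hpS, hp1, hp2⟩ <;>
            rcases (mem_S'' q).mp hq with rfl | rfl | ⟨hqS, hq1, hq2⟩
          · rfl
          · exfalso
            rcases hor with h | h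
            · exact hii' h
            · exact hjj' h
          · exfalso
            obtain ⟨f1, f2, f3, f4⟩ := hrest_facts q hqS hq1 hq2
            rcases hor with h | h
            · exact f1 h.symm
            · exact f3 h.symm
          · exfalso
            rcases hor with h | h
            · exact hii' h.symm
            · exact hjj' h.symm
          · rfl
          · exfalso
            obtain ⟨f1, f2, f3, f4⟩ := hrest_facts q hqS hq1 hq2
            rcases hor with h | h
            · exact f2 h.symm
            · exact f4 h.symm
          · exfalso
            obtain ⟨f1, f2, f3, f4⟩ := hrest_facts p hpS hp1 hp2
            rcases hor with h | h
            · exact f1 h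
            · exact f3 h
          · exfalso
            obtain ⟨f1, f2, f3, f4⟩ := hrest_facts p hpS hp1 hp2
            rcases hor with h | h
            · exact f2 h
            · exact f4 h
          · exact hS' p hpS q hqS hor
        have rows_S'' : rowsOf S'' = rowsOf S' := by
          ext r
          simp only [rowsOf, Finset.mem_image]
          constructor
          · rintro ⟨p, hp, rfl⟩
            rcases (mem_S'' p).mp hp with rfl | rfl | ⟨hpS, _, _⟩
            · exact ⟨(i,j'), hp'S', rfl⟩
            · exact ⟨(i',j), hq'S', rfl⟩
            · exact ⟨p, hpS, rfl⟩
          · rintro ⟨p, hp, rfl⟩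
            by_cases h1 : p = (i,j')
            · subst h1
              exact ⟨(i,j), (mem_S'' _).mpr (Or.inl rfl), rfl⟩
            · by_cases h2 : p = (i',j)
              · subst h2
                exact ⟨(i',j'), (mem_S'' _).mpr (Or.inr (Or.inl rfl)), rfl⟩
              · exact ⟨p, (mem_S'' p).mpr (Or.inr (Or.inr ⟨hp, h1, h2⟩)), rfl⟩
        have cols_S'' : colsOf S'' = colsOf S' := by
          ext r
          simp only [colsOf, Finset.mem_image]
          constructor
          · rintro ⟨p, hp, rfl⟩
            rcases (mem_S'' p).mp hp with rfl | rfl | ⟨hpS, _, _⟩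
            · exact ⟨(i',j), hq'S', rfl⟩
            · exact ⟨(i,j'), hp'S', rfl⟩
            · exact ⟨p, hpS, rfl⟩
          · rintro ⟨p, hp, rfl⟩
            by_cases h1 : p = (i,j')
            · subst h1
              exact ⟨(i',j'), (mem_S'' _).mpr (Or.inr (Or.inl rfl)), rfl⟩
            · by_cases h2 : p = (i',j)
              · subst h2
                exact ⟨(i,j), (mem_S'' _).mpr (Or.inl rfl), rfl⟩
              · exact ⟨p, (mem_S'' p).mpr (Or.inr (Or.inr ⟨hp, h1, h2⟩)), rfl⟩
        have hcard'' : (S'' \ S).card ≤ n := by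
          have hpair_sub : ({(i,j'), (i',j)} : Finset (Idx d)) ⊆ S' \ S := by
            intro p hp
            rcases Finset.mem_insert.mp hp with rfl | hp
            · exact Finset.mem_sdiff.mpr ⟨hp'S', hij'_notS⟩
            · rw [Finset.mem_singleton] at hp
              subst hp
              exact Finset.mem_sdiff.mpr ⟨hq'S', hi'j_notS⟩
          have hpair_card : ({(i,j'), (i',j)} : Finset (Idx d)).card = 2 :=
            Finset.card_pair hne1
          have hsubset : S'' \ S ⊆ insert ((i',j') : Idx d)
              ((S' \ S) \ {(i,j'), (i',j)}) := by
            intro p hp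
            obtain ⟨hp1, hp2⟩ := Finset.mem_sdiff.mp hp
            rcases (mem_S'' p).mp hp1 with rfl | rfl | ⟨hpS, h1, h2⟩
            · exact absurd hijS hp2
            · exact Finset.mem_insert_self _ _
            · refine Finset.mem_insert_of_mem (Finset.mem_sdiff.mpr
                ⟨Finset.mem_sdiff.mpr ⟨hpS, hp2⟩, ?_⟩)
              simp only [Finset.mem_insert, Finset.mem_singleton]
              push_neg
              exact ⟨h1, h2⟩
          have h1 := Finset.card_le_card hsubset
          have h2 := Finset.card_insert_le ((i',j') : Idx d) ((S' \ S) \ {(i,j'), (i',j)})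
          have h3 : ((S' \ S) \ ({(i,j'), (i',j)} : Finset (Idx d))).card
              = (S' \ S).card - 2 := by
            rw [Finset.card_sdiff_of_subset hpair_sub, hpair_card]
          have h4 : 2 ≤ (S' \ S).card := by
            calc 2 = ({(i,j'), (i',j)} : Finset (Idx d)).card := hpair_card.symm
            _ ≤ (S' \ S).card := Finset.card_le_card hpair_sub
          omega
        -- the step: monomial (mS S') 1 - monomial (mS S'') 1 ∈ span
        have hS'_decomp : mS S' = mS rest + pr (i,j') (i',j) := by
          have e1 : insert ((i',j) : Idx d) rest = S'.erase (i,j') := by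
            rw [hrest_def]
            exact Finset.insert_erase (Finset.mem_erase.mpr ⟨hne1.symm, hq'S'⟩)
          have e2 : insert ((i,j') : Idx d) (insert (i',j) rest) = S' := by
            rw [e1]
            exact Finset.insert_erase hp'S'
          rw [← e2, mS_insert_insert hne1 (fun h => ((mem_rest _).mp h).2.1 rfl)
            (fun h => ((mem_rest _).mp h).2.2 rfl)]
        have hS''_decomp : mS S'' = mS rest + pr (i,j) (i',j') := by
          rw [hS''_def, mS_insert_insert hne2
            (fun h => hijS' ((mem_rest _).mp h).1)
            (fun h => hi'j'_notS' ((mem_rest _).mp h).1)]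
        have hstep : (monomial (mS S') (1:k) - monomial (mS S'') 1)
            ∈ Ideal.span (gens k d) := by
          have e3 : (monomial (mS S') (1:k) - monomial (mS S'') 1)
              = monomial (mS rest) 1 *
                (monomial (pr (i,j') (i',j)) 1 - monomial (pr (i,j) (i',j')) 1) := by
            rw [mul_sub, monomial_mul, monomial_mul, mul_one, hS'_decomp, hS''_decomp]
          rw [e3]
          refine Ideal.mul_mem_left _ _ (Ideal.subset_span ?_)
          right
          refine ⟨i, i', j', j, hii', hjj'.symm, ?_⟩
          rw [X_mul_X, X_mul_X]
        have hih := ih S'' hcard'' hnodup'' (hr.trans rows_S''.symm) (hc.trans cols_S''.symm)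
        have efinal : (monomial (mS S) (1:k) - monomial (mS S') 1)
            = (monomial (mS S) (1:k) - monomial (mS S'') 1)
              - (monomial (mS S') 1 - monomial (mS S'') 1) := by ring
        rw [efinal]
        exact Ideal.sub_mem _ hih hstep

lemma congr_mod_gens {S S' : Finset (Idx d)} (hS : nodup S) (hS' : nodup S')
    (hr : rowsOf S = rowsOf S') (hc : colsOf S = colsOf S') :
    (monomial (mS S) (1:k) - monomial (mS S') 1) ∈ Ideal.span (gens k d) :=
  congr_mod_gens_aux hS (S' \ S).card S' le_rfl hS' hr hc

end ClaimA
section ClaimB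
variable {k : Type*} [CommRing k] {d : ℕ}

lemma NN_of_le_one {b x : Idx d →₀ ℕ} (hb : ∀ p, b p ≤ 1)
    (hx : ∀ p ∈ b.support, x p = 1) : NN b x = 1 := by
  refine Finset.prod_eq_one fun p _ => ?_
  by_cases hp : p ∈ b.support
  · have h1 : b p = 1 := by
      have := Finsupp.mem_support_iff.mp hp
      have := hb p
      omega
    rw [h1, hx p hp, Nat.descFactorial_one]
  · rw [Finsupp.notMem_support_iff.mp hp, Nat.descFactorial_zero]

lemma nodup_union {S T : Finset (Idx d)} (hS : nodup S) (hT : nodup T)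
    (hr : Disjoint (rowsOf S) (rowsOf T)) (hc : Disjoint (colsOf S) (colsOf T)) :
    nodup (S ∪ T) := by
  intro p hp q hq hor
  have rmem : ∀ r : Idx d, r ∈ S → r.1 ∈ rowsOf S ∧ r.2 ∈ colsOf S := fun r hr =>
    ⟨Finset.mem_image_of_mem _ hr, Finset.mem_image_of_mem _ hr⟩
  have rmem' : ∀ r : Idx d, r ∈ T → r.1 ∈ rowsOf T ∧ r.2 ∈ colsOf T := fun r hr =>
    ⟨Finset.mem_image_of_mem _ hr, Finset.mem_image_of_mem _ hr⟩
  rcases Finset.mem_union.mp hp with hp1 | hp1 <;> rcases Finset.mem_union.mp hq with hq1 | hq1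
  · exact hS p hp1 q hq1 hor
  · exfalso
    rcases hor with h | h
    · exact Finset.disjoint_left.mp hr (rmem p hp1).1 (h ▸ (rmem' q hq1).1)
    · exact Finset.disjoint_left.mp hc (rmem p hp1).2 (h ▸ (rmem' q hq1).2)
  · exfalso
    rcases hor with h | h
    · exact Finset.disjoint_left.mp hr (h ▸ (rmem q hq1).1) (rmem' p hp1).1
    · exact Finset.disjoint_left.mp hc (h ▸ (rmem q hq1).2) (rmem' p hp1).2
  · exact hT p hp1 q hq1 hor

lemma rowsOf_union (S T : Finset (Idx d)) : rowsOf (S ∪ T) = rowsOf S ∪ rowsOf T :=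
  Finset.image_union _ _

lemma colsOf_union (S T : Finset (Idx d)) : colsOf (S ∪ T) = colsOf S ∪ colsOf T :=
  Finset.image_union _ _

lemma Dop_good_coeff {R C : Finset (Fin d)} (hcc : Rᶜ.card = Cᶜ.card)
    {b : Idx d →₀ ℕ} (hb : good b) :
    (NN b (mS (ppSet Rᶜ Cᶜ hcc) + b) : k) * (perd k d).coeff (mS (ppSet Rᶜ Cᶜ hcc) + b)
      = if rowsOf b.support = R ∧ colsOf b.support = C then 1 else 0 := by
  classical
  set Sc := ppSet Rᶜ Cᶜ hcc with hSc
  have hndc : nodup Sc := nodup_ppSet _ _ _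
  have hrowsc : rowsOf Sc = Rᶜ := rows_ppSet _ _ _
  have hcolsc : colsOf Sc = Cᶜ := cols_ppSet _ _ _
  by_cases hkey : rowsOf b.support = R ∧ colsOf b.support = C
  · rw [if_pos hkey]
    have hdisj : Disjoint Sc b.support := by
      rw [Finset.disjoint_left]
      intro p hp hpb
      have h1 : p.1 ∈ Rᶜ := hrowsc ▸ Finset.mem_image_of_mem _ hp
      have h2 : p.1 ∈ R := hkey.1 ▸ Finset.mem_image_of_mem _ hpb
      exact (Finset.mem_compl.mp h1) h2
    have hsum : mS Sc + b = mS (Sc ∪ b.support) := by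
      rw [mS_union_disjoint hdisj]
      rw [← good_eq_mS hb]
    have hnd : nodup (Sc ∪ b.support) := by
      refine nodup_union hndc hb.2 ?_ ?_
      · rw [hrowsc, hkey.1]
        exact disjoint_compl_left
      · rw [hcolsc, hkey.2]
        exact disjoint_compl_left
    have hrfull : rowsOf (Sc ∪ b.support) = Finset.univ := by
      rw [rowsOf_union, hrowsc, hkey.1]
      ext x
      simp [em' (x ∈ R)]
    have hcfull : colsOf (Sc ∪ b.support) = Finset.univ := by
      rw [colsOf_union, hcolsc, hkey.2]
      ext x
      simp [em' (x ∈ C)]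
    obtain ⟨s, hs⟩ := exists_perm_of_full hnd hrfull hcfull
    rw [hsum, hs, coeff_perd_mS, mul_one]
    have hNN : NN b (mS (graph s)) = 1 := by
      refine NN_of_le_one hb.1 fun p hp => ?_
      rw [← hs, mS_apply, if_pos (Finset.mem_union_right _ hp)]
    rw [hNN, Nat.cast_one]
  · rw [if_neg hkey]
    by_contra hne
    have hcoeff : (perd k d).coeff (mS Sc + b) ≠ 0 := by
      intro h
      rw [h, mul_zero] at hne
      exact hne rfl
    obtain ⟨s, hs⟩ := exists_perm_of_coeff_ne_zero hcoeff
    set G := graph s with hG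
    have hle1 : ∀ p, mS G p ≤ 1 := mS_le_one G
    have hval : ∀ p, mS Sc p + b p = mS G p := by
      intro p
      have := congrArg (fun f : Idx d →₀ ℕ => f p) hs
      simpa [Finsupp.add_apply] using this
    have hScG : ∀ p : Idx d, p ∈ Sc → p ∈ G := by
      intro p hp
      have h1 : mS Sc p = 1 := by rw [mS_apply, if_pos hp]
      have h2 := hval p
      refine mem_of_mS_pos ?_
      omega
    have hbG : ∀ p : Idx d, p ∈ b.support → p ∈ G := by
      intro p hp
      have h1 : 1 ≤ b p := Nat.one_le_iff_ne_zero.mpr (Finsupp.mem_support_iff.mp hp)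
      have h2 := hval p
      refine mem_of_mS_pos ?_
      omega
    have hdisj : ∀ p : Idx d, p ∈ Sc → p ∉ b.support := by
      intro p hp hpb
      have h1 : mS Sc p = 1 := by rw [mS_apply, if_pos hp]
      have h2 : 1 ≤ b p := Nat.one_le_iff_ne_zero.mpr (Finsupp.mem_support_iff.mp hpb)
      have h3 := hval p
      have h4 := hle1 p
      omega
    have hcover : ∀ p : Idx d, p ∈ G → p ∈ Sc ∨ p ∈ b.support := by
      intro p hp
      have h1 : mS G p = 1 := by rw [mS_apply, if_pos hp]
      have h2 := hval p
      by_contra hc2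
      push_neg at hc2
      have h3 : mS Sc p = 0 := by rw [mS_apply, if_neg hc2.1]
      have h4 : b p = 0 := Finsupp.notMem_support_iff.mp hc2.2
      omega
    have hnodupG : nodup G := nodup_graph s
    have hrows : rowsOf b.support = R := by
      ext i
      constructor
      · intro hi
        obtain ⟨p, hp, hp1⟩ := Finset.mem_image.mp hi
        by_contra hiR
        have hic : i ∈ Rᶜ := Finset.mem_compl.mpr hiR
        rw [← hrowsc] at hic
        obtain ⟨q, hq, hq1⟩ := Finset.mem_image.mp hic
        have hpq : p = q := hnodupG p (hbG p hp) q (hScG q hq) (Or.inl (hp1.trans hq1.symm))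
        exact hdisj q hq (hpq ▸ hp)
      · intro hi
        have hiG : i ∈ rowsOf G := by rw [hG, rows_graph]; exact Finset.mem_univ i
        obtain ⟨p, hp, hp1⟩ := Finset.mem_image.mp hiG
        rcases hcover p hp with h | h
        · exfalso
          have : i ∈ Rᶜ := hrowsc ▸ (hp1 ▸ Finset.mem_image_of_mem _ h)
          exact Finset.mem_compl.mp this hi
        · exact hp1 ▸ Finset.mem_image_of_mem _ h
    have hcols : colsOf b.support = C := by
      ext j
      constructor
      · intro hj
        obtain ⟨p, hp, hp1⟩ := Finset.mem_image.mp hj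
        by_contra hjC
        have hjc : j ∈ Cᶜ := Finset.mem_compl.mpr hjC
        rw [← hcolsc] at hjc
        obtain ⟨q, hq, hq1⟩ := Finset.mem_image.mp hjc
        have hpq : p = q := hnodupG p (hbG p hp) q (hScG q hq) (Or.inr (hp1.trans hq1.symm))
        exact hdisj q hq (hpq ▸ hp)
      · intro hj
        have hjG : j ∈ colsOf G := by rw [hG, cols_graph]; exact Finset.mem_univ j
        obtain ⟨p, hp, hp1⟩ := Finset.mem_image.mp hjG
        rcases hcover p hp with h | h
        · exfalso
          have : j ∈ Cᶜ := hcolsc ▸ (hp1 ▸ Finset.mem_image_of_mem _ h)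
          exact Finset.mem_compl.mp this hj
        · exact hp1 ▸ Finset.mem_image_of_mem _ h
    exact hkey ⟨hrows, hcols⟩

end ClaimB
section Final
variable {k : Type*} [Field k] {d : ℕ}

lemma forward {θ : MvPolynomial (Idx d) k} (h : diffAction θ (perd k d) = 0) :
    θ ∈ Ideal.span (gens k d) := by
  classical
  set T := θ.support.filter (fun b => good b) with hT
  set ρ : MvPolynomial (Idx d) k := ∑ b ∈ T, monomial b (θ.coeff b) with hρ
  have hsplit : θ - ρ ∈ Ideal.span (gens k d) := by
    have htot : ∑ b ∈ θ.support, monomial b (θ.coeff b) = θ := support_sum_monomial_coeff θ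
    have hdecomp : θ - ρ
        = ∑ b ∈ θ.support.filter (fun b => ¬ good b), monomial b (θ.coeff b) := by
      calc θ - ρ = (∑ b ∈ θ.support.filter (fun b => good b), monomial b (θ.coeff b)
          + ∑ b ∈ θ.support.filter (fun b => ¬ good b), monomial b (θ.coeff b)) - ρ := by
            rw [Finset.sum_filter_add_sum_filter_not, htot]
        _ = _ := by rw [hρ, hT]; ring
    rw [hdecomp]
    exact Ideal.sum_mem _ fun b hb => bad_mem_span (Finset.mem_filter.mp hb).2 _
  have hρ0 : diffAction ρ (perd k d) = 0 := by
    have h1 : diffAction (θ - ρ) (perd k d) = 0 := span_gens_le_apolar hsplit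
    rw [diffAction_sub, h, zero_sub, neg_eq_zero] at h1
    exact h1
  have hexp : ∑ b ∈ T, θ.coeff b • Dop b (perd k d) = 0 := by
    rw [← hρ0, hρ, diffAction_sum_left]
    exact Finset.sum_congr rfl fun b _ => (diffAction_monomial b _ _).symm
  have claimB : ∀ R C : Finset (Fin d), Rᶜ.card = Cᶜ.card →
      ∑ b ∈ T.filter (fun b => rowsOf b.support = R ∧ colsOf b.support = C), θ.coeff b = 0 := by
    intro R C hcc
    have h0 := congrArg (MvPolynomial.coeff (mS (ppSet Rᶜ Cᶜ hcc))) hexp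
    rw [MvPolynomial.coeff_sum, coeff_zero] at h0
    have h1 : ∀ b ∈ T, MvPolynomial.coeff (mS (ppSet Rᶜ Cᶜ hcc)) (θ.coeff b • Dop b (perd k d))
        = if rowsOf b.support = R ∧ colsOf b.support = C then θ.coeff b else 0 := by
      intro b hb
      have hgood : good b := (Finset.mem_filter.mp hb).2
      rw [coeff_smul, coeff_Dop, smul_eq_mul, Dop_good_coeff hcc hgood, mul_ite, mul_one,
        mul_zero]
    rw [Finset.sum_congr rfl h1, ← Finset.sum_filter] at h0
    exact h0
  suffices hρI : ρ ∈ Ideal.span (gens k d) by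
    have he : θ = (θ - ρ) + ρ := by ring
    rw [he]
    exact Ideal.add_mem _ hsplit hρI
  set key : (Idx d →₀ ℕ) → Finset (Fin d) × Finset (Fin d) :=
    fun b => (rowsOf b.support, colsOf b.support) with hkey
  have hmaps : ∀ b ∈ T, key b ∈ T.image key := fun b hb => Finset.mem_image_of_mem _ hb
  have hfiber := Finset.sum_fiberwise_of_maps_to hmaps (fun b => monomial b (θ.coeff b))
  rw [hρ, ← hfiber]
  refine Ideal.sum_mem _ fun κ hκ => ?_
  obtain ⟨b₀, hb₀T, hb₀key⟩ := Finset.mem_image.mp hκ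
  obtain ⟨R, C⟩ := κ
  have hb₀good : good b₀ := (Finset.mem_filter.mp hb₀T).2
  have hR : rowsOf b₀.support = R := (Prod.ext_iff.mp hb₀key).1
  have hC : colsOf b₀.support = C := (Prod.ext_iff.mp hb₀key).2
  have hRC : R.card = C.card := by
    rw [← hR, ← hC, card_rowsOf hb₀good.2, card_colsOf hb₀good.2]
  have hcc : Rᶜ.card = Cᶜ.card := by
    rw [Finset.card_compl, Finset.card_compl, hRC]
  set rep := mS (ppSet R C hRC) with hrep
  have hfilter_eq : T.filter (fun b => key b = (R, C))
      = T.filter (fun b => rowsOf b.support = R ∧ colsOf b.support = C) := by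
    refine Finset.filter_congr fun b _ => ?_
    rw [hkey]
    simp [Prod.ext_iff]
  have hsum0 : ∑ b ∈ T.filter (fun b => key b = (R,C)), θ.coeff b = 0 := by
    rw [hfilter_eq]
    exact claimB R C hcc
  have hterm : ∀ b ∈ T.filter (fun b => key b = (R,C)),
      monomial b (θ.coeff b) = MvPolynomial.C (θ.coeff b) *
        (monomial b 1 - monomial rep 1) + monomial rep (θ.coeff b) := by
    intro b _
    rw [mul_sub, C_mul_monomial, C_mul_monomial, mul_one]
    ring
  rw [Finset.sum_congr rfl hterm, Finset.sum_add_distrib]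
  refine Ideal.add_mem _ (Ideal.sum_mem _ fun b hb => ?_) ?_
  · refine Ideal.mul_mem_left _ _ ?_
    have hbT := (Finset.mem_filter.mp hb).1
    have hbkey := (Finset.mem_filter.mp hb).2
    have hbgood : good b := (Finset.mem_filter.mp hbT).2
    have hbR : rowsOf b.support = R := (Prod.ext_iff.mp hbkey).1
    have hbC : colsOf b.support = C := (Prod.ext_iff.mp hbkey).2
    have hcongr := congr_mod_gens (k := k) (S := b.support) (S' := ppSet R C hRC) hbgood.2
      (nodup_ppSet _ _ _) (by rw [hbR, rows_ppSet]) (by rw [hbC, cols_ppSet])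
    rw [← good_eq_mS hbgood] at hcongr
    exact hcongr
  · have hms : ∑ b ∈ T.filter (fun b => key b = (R,C)), monomial rep (θ.coeff b)
        = monomial rep (∑ b ∈ T.filter (fun b => key b = (R,C)), θ.coeff b) :=
      (map_sum (monomial rep : k →ₗ[k] MvPolynomial (Idx d) k) (fun b => θ.coeff b) _).symm
    rw [hms, hsum0, monomial_zero]
    exact Ideal.zero_mem _

end Final

end Apolar

open Apolar

/-- Shafiei's theorem: for `d ≥ 2`, over a field of characteristic 0, the apolar ideal of the
generic `d × d` permanent is generated by the quadrics: squares of variables, products of two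
variables from the same row, products of two variables from the same column, and `2 × 2`
determinants of the matrix of dual variables. -/
theorem per_apolar_ideal_gens (k : Type*) [Field k] [CharZero k] (d : ℕ) (hd : 2 ≤ d) :
    ∀ θ : MvPolynomial (Fin d × Fin d) k,
      diffAction θ (perd k d) = 0 ↔
        θ ∈ Ideal.span
          ({p | ∃ i j : Fin d, p = X (i, j) ^ 2} ∪
           {p | ∃ (i j₁ j₂ : Fin d), j₁ ≠ j₂ ∧ p = X (i, j₁) * X (i, j₂)} ∪
           {p | ∃ (i₁ i₂ j : Fin d), i₁ ≠ i₂ ∧ p = X (i₁, j) * X (i₂, j)} ∪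
           {p | ∃ (i k' j l : Fin d), i ≠ k' ∧ j ≠ l ∧
              p = X (i, j) * X (k', l) - X (i, l) * X (k', j)}) := by
  intro θ
  constructor
  · intro h
    exact forward h
  · intro h
    exact span_gens_le_apolar h
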